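/- Let t, u, v, w be real numbers with w > 0, t > 1, and t² + 4v² − 4uw = 1, and let 0 ≤ ε ≤ t − √(t² − 1). Let D be the closed disk {(x,y) : (x − v/w)² + (y − t/(2w))² ≤ 1/(4w²)} and for (x,y) ∈ D set H(x,y) = (w/y)·(1/(4w²) − (x − v/w)² − (y − t/(2w))²). Then: (i) the set {(x,y) ∈ D : H(x,y) ≥ t − √(t² − 1) − ε} equals the closed disk {(x,y) : (x − v/w)² + (y − (√(t²−1)+ε)/(2w))² ≤ (ε² + 2ε√(t²−1))/(4w²)}, which is contained in D; and (ii) the hyperbolic area of this set (the integral of 1/y² over it) equals 2πε/√(t² − 1). In particular the values of H are uniformly distributed on [0, t − √(t²−1)] with respect to the hyperbolic metric on D. -/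

import Mathlib

set_option maxHeartbeats 2000000


open MeasureTheory

/-- The depth circle with coefficient quadruple `(t,u,v,w)`: the closed disk of
center `(v/w, t/(2w))` and radius `1/(2w)`. -/
def depthDisk (t v w : ℝ) : Set (ℝ × ℝ) :=
  {p | (p.1 - v / w) ^ 2 + (p.2 - t / (2 * w)) ^ 2 ≤ 1 / (4 * w ^ 2)}

/-- The height function on the depth circle. -/
noncomputable def heightFun (t v w : ℝ) (p : ℝ × ℝ) : ℝ :=
  (w / p.2) * (1 / (4 * w ^ 2) - (p.1 - v / w) ^ 2 - (p.2 - t / (2 * w)) ^ 2)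

/-- The `ε`-circle: the closed disk of center `(v/w, (√(t²−1)+ε)/(2w))` and
squared radius `(ε² + 2ε√(t²−1))/(4w²)`. -/
noncomputable def epsDisk (t v w ε : ℝ) : Set (ℝ × ℝ) :=
  {p | (p.1 - v / w) ^ 2 + (p.2 - (Real.sqrt (t ^ 2 - 1) + ε) / (2 * w)) ^ 2
    ≤ (ε ^ 2 + 2 * ε * Real.sqrt (t ^ 2 - 1)) / (4 * w ^ 2)}


section Aux
open Real

lemma slice_integral (y₀ s : ℝ) (hc : s < y₀) (hs0 : 0 ≤ s) :
    ∫ y in Set.Icc (y₀ - s) (y₀ + s), 1/y^2 = 1/(y₀ - s) - 1/(y₀ + s) := by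
  have hle : y₀ - s ≤ y₀ + s := by linarith
  rw [MeasureTheory.integral_Icc_eq_integral_Ioc, ← intervalIntegral.integral_of_le hle]
  have hpos : ∀ y ∈ Set.uIcc (y₀ - s) (y₀ + s), 0 < y := by
    intro y hy'
    rw [Set.uIcc_of_le hle] at hy'
    linarith [hy'.1]
  have hderiv : ∀ y ∈ Set.uIcc (y₀ - s) (y₀ + s), HasDerivAt (fun y : ℝ => -y⁻¹) (1/y^2) y := by
    intro y hy'
    exact (hasDerivAt_inv (ne_of_gt (hpos y hy'))).neg.congr_deriv (by simp [one_div])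
  have hint : IntervalIntegrable (fun y : ℝ => 1/y^2) volume (y₀ - s) (y₀ + s) := by
    apply ContinuousOn.intervalIntegrable
    exact ContinuousOn.div continuousOn_const (by fun_prop)
      (fun y hy' => by have := hpos y hy'; positivity)
  rw [intervalIntegral.integral_eq_sub_of_hasDerivAt hderiv hint]
  have h1 : y₀ - s ≠ 0 := by linarith
  have h2 : y₀ + s ≠ 0 := ne_of_gt (by linarith)
  field_simp
  ring

lemma disk_slice (a y₀ r x y : ℝ) :
    ((x, y) ∈ {p : ℝ × ℝ | (p.1 - a)^2 + (p.2 - y₀)^2 ≤ r^2}) ↔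
      (y - y₀)^2 ≤ r^2 - (x - a)^2 := by
  simp only [Set.mem_setOf_eq]
  constructor <;> intro h <;> linarith

noncomputable def Farc (a y₀ r k : ℝ) (x : ℝ) : ℝ :=
  (2*y₀/k) * Real.arcsin (y₀*(x-a)/(r * Real.sqrt ((x-a)^2+k^2))) - 2 * Real.arcsin ((x-a)/r)

lemma hasDeriv_Farc (a y₀ r k : ℝ) (hr : 0 < r) (hy : r < y₀) (hk : 0 < k)
    (hk2 : k^2 = y₀^2 - r^2) {x : ℝ} (hx : x ∈ Set.Ioo (a-r) (a+r)) :
    HasDerivAt (Farc a y₀ r k)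
      (1/(y₀ - Real.sqrt (r^2-(x-a)^2)) - 1/(y₀ + Real.sqrt (r^2-(x-a)^2))) x := by
  obtain ⟨hx1, hx2⟩ := hx
  unfold Farc
  have hy0 : 0 < y₀ := lt_trans hr hy
  have hs2 : (x-a)^2 < r^2 := by nlinarith
  set P := Real.sqrt (r^2-(x-a)^2) with hPdef
  set Q := Real.sqrt ((x-a)^2+k^2) with hQdef
  have hP : 0 < P := Real.sqrt_pos.mpr (by nlinarith)
  have hP2 : P^2 = r^2-(x-a)^2 := Real.sq_sqrt (by nlinarith)
  have hQ : 0 < Q := Real.sqrt_pos.mpr (by nlinarith)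
  have hQ2 : Q^2 = (x-a)^2+k^2 := Real.sq_sqrt (by nlinarith)
  have hPr : P < y₀ := by nlinarith
  -- second arcsin term
  have h1 : HasDerivAt (fun x : ℝ => (x-a)/r) (1/r) x := by
    simpa using ((hasDerivAt_id x).sub_const a).div_const r
  have hvlt : |(x-a)/r| < 1 := by
    rw [abs_div, abs_of_pos hr, div_lt_one hr, abs_lt]
    constructor <;> nlinarith
  have h2 : HasDerivAt (fun x : ℝ => Real.arcsin ((x-a)/r))
      (1/Real.sqrt (1-((x-a)/r)^2) * (1/r)) x :=
    (Real.hasDerivAt_arcsin (by intro h; rw [h] at hvlt; simp at hvlt)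
      (by intro h; rw [h] at hvlt; simp at hvlt)).comp x h1
  have hsv : Real.sqrt (1-((x-a)/r)^2) = P/r := by
    have e : 1-((x-a)/r)^2 = (P/r)^2 := by
      field_simp
      linarith [hP2]
    rw [e, Real.sqrt_sq (by positivity)]
  -- first arcsin term
  have hq : HasDerivAt (fun x : ℝ => (x-a)^2 + k^2) (2*(x-a)) x := by
    have := (((hasDerivAt_id x).sub_const a).pow 2).add_const (k^2)
    simpa using this
  have hsq : HasDerivAt (fun x : ℝ => Real.sqrt ((x-a)^2+k^2)) (1/(2*Q) * (2*(x-a))) x :=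
    (Real.hasDerivAt_sqrt (by positivity)).comp x hq
  have hD : HasDerivAt (fun x : ℝ => r * Real.sqrt ((x-a)^2+k^2)) (r * (1/(2*Q) * (2*(x-a)))) x :=
    hsq.const_mul r
  have hN : HasDerivAt (fun x : ℝ => y₀*(x-a)) (y₀ * 1) x :=
    ((hasDerivAt_id x).sub_const a).const_mul y₀
  have hDne : r * Q ≠ 0 := by positivity
  have hu : HasDerivAt (fun x : ℝ => y₀*(x-a)/(r * Real.sqrt ((x-a)^2+k^2)))
      ((y₀ * 1 * (r*Q) - y₀*(x-a) * (r * (1/(2*Q) * (2*(x-a))))) / (r*Q)^2) x :=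
    hN.div hD hDne
  have key : (r*Q)^2 - (y₀*(x-a))^2 = (k*P)^2 := by
    linear_combination (-(k^2)) * hP2 + r^2 * hQ2 + (x-a)^2 * hk2
  have hu2 : 1 - (y₀*(x-a)/(r*Q))^2 = (k*P/(r*Q))^2 := by
    rw [div_pow, div_pow, one_sub_div (pow_ne_zero 2 hDne), key]
  have huabs : |y₀*(x-a)/(r*Q)| < 1 := by
    have h0 : (0:ℝ) < (k*P/(r*Q))^2 := by positivity
    nlinarith [sq_abs (y₀*(x-a)/(r*Q)), abs_nonneg (y₀*(x-a)/(r*Q))]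
  have harc1 : HasDerivAt (fun x : ℝ => Real.arcsin (y₀*(x-a)/(r * Real.sqrt ((x-a)^2+k^2))))
      (1/Real.sqrt (1-(y₀*(x-a)/(r*Q))^2)
        * ((y₀ * 1 * (r*Q) - y₀*(x-a) * (r * (1/(2*Q) * (2*(x-a))))) / (r*Q)^2)) x :=
    (Real.hasDerivAt_arcsin (by intro h; rw [h] at huabs; simp at huabs)
      (by intro h; rw [h] at huabs; simp at huabs)).comp x hu
  have hsu : Real.sqrt (1-(y₀*(x-a)/(r*Q))^2) = k*P/(r*Q) := by
    rw [hu2, Real.sqrt_sq (by positivity)]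
  have final := (harc1.const_mul (2*y₀/k)).sub (h2.const_mul 2)
  rw [hsu, hsv] at final
  refine final.congr_deriv ?_
  symm
  have hyP1 : y₀ - P ≠ 0 := by nlinarith
  have hyP2 : y₀ + P ≠ 0 := by nlinarith
  have hQ2' : Q^2 = y₀^2 - P^2 := by nlinarith [hP2, hQ2, hk2]
  field_simp
  linear_combination 2*k^2*y₀^2*hQ2' - 2*(y₀^2-P^2)*y₀^2*hQ2


lemma disk_integral (a y₀ r : ℝ) (hr : 0 < r) (hy : r < y₀) :
    ∫ p in {p : ℝ × ℝ | (p.1 - a)^2 + (p.2 - y₀)^2 ≤ r^2}, 1 / p.2^2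
      = 2 * Real.pi * (y₀ / Real.sqrt (y₀^2 - r^2) - 1) := by
  have hy0 : 0 < y₀ := lt_trans hr hy
  set S := {p : ℝ × ℝ | (p.1 - a)^2 + (p.2 - y₀)^2 ≤ r^2} with hSdef
  set f : ℝ × ℝ → ℝ := fun p => 1 / p.2^2 with hfdef
  have hSm : MeasurableSet S := by
    apply measurableSet_le (by fun_prop) measurable_const
  have hpos : ∀ p ∈ S, 0 < p.2 := by
    intro p hp
    simp only [hSdef, Set.mem_setOf_eq] at hp
    nlinarith [sq_nonneg (p.1 - a), sq_nonneg (p.2 - y₀ + r)]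
  have hScomp : IsCompact S := by
    apply IsCompact.of_isClosed_subset (isCompact_Icc (a := (a - r, y₀ - r)) (b := (a + r, y₀ + r)))
    · exact isClosed_le (by fun_prop) continuous_const
    · intro p hp
      simp only [hSdef, Set.mem_setOf_eq] at hp
      constructor <;> constructor <;> simp <;> nlinarith [sq_nonneg (p.1 - a), sq_nonneg (p.2 - y₀)]
  have hInt : IntegrableOn f S volume := by
    apply ContinuousOn.integrableOn_compact hScomp
    exact ContinuousOn.div continuousOn_const (by fun_prop)
      (fun p hp => by have := hpos p hp; positivity)
  set g : ℝ → ℝ := fun x =>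
    1/(y₀ - Real.sqrt (r^2 - (x-a)^2)) - 1/(y₀ + Real.sqrt (r^2 - (x-a)^2)) with hgdef
  have hsqrt_le : ∀ x : ℝ, Real.sqrt (r^2 - (x-a)^2) ≤ r := by
    intro x
    calc Real.sqrt (r^2 - (x-a)^2) ≤ Real.sqrt (r^2) :=
          Real.sqrt_le_sqrt (by nlinarith [sq_nonneg (x-a)])
      _ = r := Real.sqrt_sq hr.le
  have inner : ∀ x : ℝ, (∫ y : ℝ, S.indicator f (x, y)) = g x := by
    intro x
    rcases lt_or_ge (r^2 - (x-a)^2) 0 with hc | hc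
    · have hind : ∀ y : ℝ, S.indicator f (x, y) = 0 := by
        intro y
        apply Set.indicator_of_notMem
        rw [disk_slice]
        intro h
        nlinarith [sq_nonneg (y - y₀)]
      have hg0 : g x = 0 := by
        simp only [hgdef]
        rw [Real.sqrt_eq_zero'.mpr hc.le]
        ring
      rw [hg0]
      simp [hind]
    · set c := r^2 - (x-a)^2 with hcdef
      have hs0 : 0 ≤ Real.sqrt c := Real.sqrt_nonneg c
      have hsc : Real.sqrt c < y₀ := lt_of_le_of_lt (hsqrt_le x) hy
      have hind : ∀ y : ℝ, S.indicator f (x, y)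
          = (Set.Icc (y₀ - Real.sqrt c) (y₀ + Real.sqrt c)).indicator (fun y => 1/y^2) y := by
        intro y
        rw [Set.indicator_apply, Set.indicator_apply]
        congr 1
        rw [eq_iff_iff, disk_slice, Set.mem_Icc, ← hcdef]
        constructor
        · intro h
          have h2 : |y - y₀| ≤ Real.sqrt c := by
            rw [← Real.sqrt_sq_eq_abs]
            exact Real.sqrt_le_sqrt h
          rw [abs_le] at h2
          constructor <;> linarith [h2.1, h2.2]
        · intro ⟨h1, h2⟩
          have : |y - y₀| ≤ Real.sqrt c := abs_le.mpr ⟨by linarith, by linarith⟩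
          calc (y - y₀)^2 = |y - y₀|^2 := (sq_abs _).symm
            _ ≤ Real.sqrt c ^ 2 := by gcongr
            _ = c := Real.sq_sqrt hc
      rw [show (∫ y : ℝ, S.indicator f (x, y))
            = ∫ y : ℝ, (Set.Icc (y₀ - Real.sqrt c) (y₀ + Real.sqrt c)).indicator
                (fun y => 1/y^2) y from by simp_rw [hind],
        MeasureTheory.integral_indicator measurableSet_Icc,
        slice_integral y₀ (Real.sqrt c) hsc hs0]
  set k := Real.sqrt (y₀^2 - r^2) with hkdef
  have hk : 0 < k := Real.sqrt_pos.mpr (by nlinarith)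
  have hk2 : k^2 = y₀^2 - r^2 := Real.sq_sqrt (by nlinarith)
  have fubini : ∫ p in S, f p = ∫ x : ℝ, g x := by
    rw [← MeasureTheory.integral_indicator hSm, MeasureTheory.Measure.volume_eq_prod,
      MeasureTheory.integral_prod]
    · simp_rw [inner]
    · have h2 : Integrable (S.indicator f) volume := (integrable_indicator_iff hSm).mpr hInt
      rwa [MeasureTheory.Measure.volume_eq_prod] at h2
  have houter0 : ∀ x ∉ Set.Icc (a-r) (a+r), g x = 0 := by
    intro x hx
    rw [Set.mem_Icc] at hx
    push_neg at hx
    have hneg : r^2 - (x-a)^2 < 0 := by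
      by_cases hle : a - r ≤ x
      · have := hx hle; nlinarith
      · push_neg at hle; nlinarith
    simp only [hgdef]
    rw [Real.sqrt_eq_zero'.mpr hneg.le]
    ring
  have hgcont : Continuous g := by
    have hc1 : Continuous fun x : ℝ => Real.sqrt (r^2 - (x-a)^2) := by fun_prop
    apply Continuous.sub
    · exact Continuous.div continuous_const (continuous_const.sub hc1)
        (fun x => ne_of_gt (by linarith [hsqrt_le x]))
    · exact Continuous.div continuous_const (continuous_const.add hc1)
        (fun x => ne_of_gt (by linarith [Real.sqrt_nonneg (r^2 - (x-a)^2)]))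
  have hFcont : Continuous (Farc a y₀ r k) := by
    unfold Farc
    have hc2 : Continuous fun x : ℝ => r * Real.sqrt ((x-a)^2 + k^2) := by fun_prop
    have hc3 : Continuous fun x : ℝ => y₀*(x-a)/(r * Real.sqrt ((x-a)^2+k^2)) := by
      apply Continuous.div (by fun_prop) hc2
      intro x
      have : 0 < Real.sqrt ((x-a)^2 + k^2) := Real.sqrt_pos.mpr (by positivity)
      positivity
    apply Continuous.sub
    · exact continuous_const.mul (Real.continuous_arcsin.comp hc3)
    · exact continuous_const.mul (Real.continuous_arcsin.comp (by fun_prop))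
  have hab : a - r ≤ a + r := by linarith
  have hftc : ∫ x in (a-r)..(a+r), g x = Farc a y₀ r k (a+r) - Farc a y₀ r k (a-r) := by
    apply intervalIntegral.integral_eq_sub_of_hasDerivAt_of_le hab hFcont.continuousOn
    · exact fun x hx => hasDeriv_Farc a y₀ r k hr hy hk hk2 hx
    · exact hgcont.intervalIntegrable _ _
  have hFb : Farc a y₀ r k (a+r) = Real.pi*y₀/k - Real.pi := by
    unfold Farc
    rw [show a + r - a = r by ring, show r^2 + k^2 = y₀^2 by linarith,
      Real.sqrt_sq hy0.le, show y₀*r/(r*y₀) = 1 by field_simp,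
      div_self hr.ne', Real.arcsin_one]
    field_simp
  have hFa : Farc a y₀ r k (a-r) = Real.pi - Real.pi*y₀/k := by
    unfold Farc
    rw [show a - r - a = -r by ring, show (-r)^2 + k^2 = y₀^2 by ring_nf; linarith,
      Real.sqrt_sq hy0.le, show y₀*(-r)/(r*y₀) = -1 by field_simp,
      show -r/r = -1 by field_simp, Real.arcsin_neg_one]
    field_simp
    ring
  rw [fubini, ← setIntegral_eq_integral_of_forall_compl_eq_zero houter0,
    MeasureTheory.integral_Icc_eq_integral_Ioc, ← intervalIntegral.integral_of_le hab,
    hftc, hFb, hFa]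
  field_simp
  ring

lemma mem_depth_iff (t v w : ℝ) (hw : 0 < w) (p : ℝ × ℝ) :
    p ∈ depthDisk t v w ↔
      4*w^2*(p.1 - v/w)^2 + (2*w*p.2 - t)^2 ≤ 1 := by
  have h4w : (0:ℝ) < 4*w^2 := by positivity
  rw [depthDisk, Set.mem_setOf_eq, le_div_iff₀ h4w,
    show (((p.1 - v/w)^2 + (p.2 - t/(2*w))^2) * (4*w^2))
      = 4*w^2*(p.1 - v/w)^2 + (2*w*p.2 - t)^2 from by field_simp; ring]

lemma mem_eps_iff (t v w ε : ℝ) (hw : 0 < w) (p : ℝ × ℝ) :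
    p ∈ epsDisk t v w ε ↔
      4*w^2*(p.1 - v/w)^2 + (2*w*p.2 - (Real.sqrt (t^2-1) + ε))^2
        ≤ ε^2 + 2*ε*Real.sqrt (t^2-1) := by
  have h4w : (0:ℝ) < 4*w^2 := by positivity
  rw [epsDisk, Set.mem_setOf_eq, le_div_iff₀ h4w,
    show (((p.1 - v/w)^2 + (p.2 - (Real.sqrt (t^2-1) + ε)/(2*w))^2) * (4*w^2))
      = 4*w^2*(p.1 - v/w)^2 + (2*w*p.2 - (Real.sqrt (t^2-1) + ε))^2 from by field_simp; ring]

section Alg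
variable {t u v w ε : ℝ} (hw : 0 < w) (ht : 1 < t)
  (hε0 : 0 ≤ ε) (hε1 : ε ≤ t - Real.sqrt (t ^ 2 - 1))

lemma depth_pos (hw : 0 < w) (ht : 1 < t) {p : ℝ × ℝ}
    (hp : 4*w^2*(p.1 - v/w)^2 + (2*w*p.2 - t)^2 ≤ 1) : 0 < p.2 := by
  nlinarith [sq_nonneg (p.1 - v/w), sq_nonneg (2*w*p.2), mul_pos hw (lt_trans one_pos ht),
    mul_pos hw hw, sq_nonneg (2*w*p.2 - t)]

lemma eps_subset_poly (hw : 0 < w) (ht : 1 < t) (hε0 : 0 ≤ ε)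
    (hε1 : ε ≤ t - Real.sqrt (t ^ 2 - 1)) {p : ℝ × ℝ}
    (hp : 4*w^2*(p.1 - v/w)^2 + (2*w*p.2 - (Real.sqrt (t^2-1) + ε))^2
      ≤ ε^2 + 2*ε*Real.sqrt (t^2-1)) :
    4*w^2*(p.1 - v/w)^2 + (2*w*p.2 - t)^2 ≤ 1 := by
  set s := Real.sqrt (t^2-1) with hsdef
  have hs2 : s^2 = t^2 - 1 := Real.sq_sqrt (by nlinarith)
  have hs0 : 0 ≤ s := Real.sqrt_nonneg _
  have hst : s < t := by nlinarith
  have hts1 : t - 1 ≤ s := by nlinarith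
  set z := 2*w*p.2 - (s + ε) with hzdef
  clear_value s z
  have hρ : Real.sqrt (ε^2 + 2*ε*s) ≤ 1 - t + s + ε := by
    rw [show (1 - t + s + ε) = Real.sqrt ((1 - t + s + ε)^2) from
      (Real.sqrt_sq (by linarith)).symm]
    apply Real.sqrt_le_sqrt
    nlinarith [mul_nonneg (by linarith : (0:ℝ) ≤ t - s - ε) (by linarith : (0:ℝ) ≤ t - 1)]
  have hz : |z| ≤ Real.sqrt (ε^2 + 2*ε*s) := by
    rw [← Real.sqrt_sq_eq_abs]
    apply Real.sqrt_le_sqrt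
    nlinarith [mul_nonneg (by positivity : (0:ℝ) ≤ 4*w^2) (sq_nonneg (p.1 - v/w))]
  obtain ⟨hz1, hz2⟩ := abs_le.mp hz
  have hρ0 : 0 ≤ Real.sqrt (ε^2 + 2*ε*s) := Real.sqrt_nonneg _
  have hc0 : (0:ℝ) ≤ t - s - ε := by linarith
  have hzt : 2*w*p.2 - t = z - (t - s - ε) := by rw [hzdef]; ring
  rw [hzt]
  nlinarith [mul_nonneg hc0 (by linarith : 0 ≤ Real.sqrt (ε^2 + 2*ε*s) - z),
    mul_nonneg hc0 (by linarith : 0 ≤ Real.sqrt (ε^2 + 2*ε*s) + z),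
    mul_nonneg (by linarith : (0:ℝ) ≤ Real.sqrt (ε^2 + 2*ε*s) + (t - s - ε))
      (by linarith : (0:ℝ) ≤ 1 - (Real.sqrt (ε^2 + 2*ε*s) + (t - s - ε)))]
end Alg

lemma height_ge_iff {t v w : ℝ} (hw : 0 < w) {p : ℝ × ℝ} (hy : 0 < p.2) (c : ℝ) :
    c ≤ heightFun t v w p ↔
      c * p.2 * (4*w) ≤ 1 - 4*w^2*(p.1 - v/w)^2 - (2*w*p.2 - t)^2 := by
  have h4w : (0:ℝ) < 4*w := by linarith
  rw [show heightFun t v w p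
      = (w * (1/(4*w^2) - (p.1 - v/w)^2 - (p.2 - t/(2*w))^2))/p.2 from by
        unfold heightFun; ring,
    le_div_iff₀ hy,
    show w * (1/(4*w^2) - (p.1 - v/w)^2 - (p.2 - t/(2*w))^2)
      = (1 - 4*w^2*(p.1 - v/w)^2 - (2*w*p.2 - t)^2)/(4*w) from by field_simp; ring,
    le_div_iff₀ h4w]

lemma superlevel_eq (t v w ε : ℝ) (hw : 0 < w) (ht : 1 < t)
    (hε0 : 0 ≤ ε) (hε1 : ε ≤ t - Real.sqrt (t ^ 2 - 1)) :
    {p ∈ depthDisk t v w | t - Real.sqrt (t ^ 2 - 1) - ε ≤ heightFun t v w p}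
      = epsDisk t v w ε := by
  have hs2 : Real.sqrt (t^2-1)^2 = t^2 - 1 := Real.sq_sqrt (by nlinarith)
  ext p
  simp only [Set.mem_sep_iff, mem_depth_iff t v w hw, mem_eps_iff t v w ε hw]
  constructor
  · rintro ⟨hD, hH⟩
    have hy := depth_pos hw ht hD
    rw [height_ge_iff hw hy] at hH
    nlinarith [hH, hs2]
  · intro hE
    have hD := eps_subset_poly hw ht hε0 hε1 hE
    refine ⟨hD, ?_⟩
    have hy := depth_pos hw ht hD
    rw [height_ge_iff hw hy]
    nlinarith [hE, hs2]

lemma eps_integral (t v w ε : ℝ) (hw : 0 < w) (ht : 1 < t) (hε0 : 0 ≤ ε) :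
    ∫ p in epsDisk t v w ε, 1 / p.2 ^ 2
      = 2 * Real.pi * ε / Real.sqrt (t ^ 2 - 1) := by
  set s := Real.sqrt (t^2-1) with hsdef
  have hs2 : s^2 = t^2 - 1 := Real.sq_sqrt (by nlinarith)
  have hs0 : 0 < s := Real.sqrt_pos.mpr (by nlinarith)
  rcases eq_or_lt_of_le hε0 with hε | hε
  · -- ε = 0
    have hnull : volume (epsDisk t v w ε) = 0 := by
      apply measure_mono_null (t := ({v/w} : Set ℝ) ×ˢ (Set.univ : Set ℝ))
      · intro p hp
        simp only [epsDisk, Set.mem_setOf_eq, ← hε, ← hsdef] at hp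
        norm_num at hp
        have h1 : (p.1 - v/w)^2 ≤ 0 := by
          have := sq_nonneg (p.2 - (s + 0)/(2*w))
          nlinarith
        have h2 : p.1 = v/w := by nlinarith [sq_nonneg (p.1 - v/w)]
        exact Set.mem_prod.mpr ⟨h2, trivial⟩
      · rw [MeasureTheory.Measure.volume_eq_prod, MeasureTheory.Measure.prod_prod,
          Real.volume_singleton, zero_mul]
    rw [MeasureTheory.Measure.restrict_eq_zero.mpr hnull, integral_zero_measure, ← hε]
    simp
  · -- ε > 0
    have hpos : 0 < ε^2 + 2*ε*s := by nlinarith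
    have hr : 0 < Real.sqrt (ε^2 + 2*ε*s)/(2*w) := by
      apply div_pos (Real.sqrt_pos.mpr hpos) (by linarith)
    have hsqlt : Real.sqrt (ε^2 + 2*ε*s) < s + ε := by
      rw [show s + ε = Real.sqrt ((s + ε)^2) from (Real.sqrt_sq (by linarith)).symm]
      exact Real.sqrt_lt_sqrt hpos.le (by nlinarith)
    have hlt : Real.sqrt (ε^2 + 2*ε*s)/(2*w) < (s + ε)/(2*w) := by
      gcongr
    have key := disk_integral (v/w) ((s + ε)/(2*w)) (Real.sqrt (ε^2 + 2*ε*s)/(2*w)) hr hlt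
    have hset : epsDisk t v w ε
        = {p : ℝ × ℝ | (p.1 - v/w)^2 + (p.2 - (s + ε)/(2*w))^2
            ≤ (Real.sqrt (ε^2 + 2*ε*s)/(2*w))^2} := by
      unfold epsDisk
      ext p
      rw [Set.mem_setOf_eq, Set.mem_setOf_eq, ← hsdef,
        show (Real.sqrt (ε^2 + 2*ε*s)/(2*w))^2 = (ε^2 + 2*ε*s)/(4*w^2) from by
          rw [div_pow, Real.sq_sqrt hpos.le]; ring_nf]
    have hinner : ((s + ε)/(2*w))^2 - (Real.sqrt (ε^2 + 2*ε*s)/(2*w))^2 = (s/(2*w))^2 := by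
      rw [div_pow, div_pow, div_pow, Real.sq_sqrt hpos.le]
      ring
    rw [hinner, Real.sqrt_sq (by positivity)] at key
    rw [hset, key]
    field_simp
    ring

end Aux

/-- The superlevel set `{H ≥ t − √(t²−1) − ε}` of the height function on a depth
circle is the `ε`-circle, contained in the depth circle, and its hyperbolic area
is `2πε/√(t²−1)`; hence the heights are uniformly distributed on
`[0, t − √(t²−1)]` with respect to the hyperbolic metric. -/
theorem height_superlevel_sets (t u v w ε : ℝ)
    (hw : 0 < w) (ht : 1 < t) (hrel : t ^ 2 + 4 * v ^ 2 - 4 * u * w = 1)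
    (hε0 : 0 ≤ ε) (hε1 : ε ≤ t - Real.sqrt (t ^ 2 - 1)) :
    {p ∈ depthDisk t v w | t - Real.sqrt (t ^ 2 - 1) - ε ≤ heightFun t v w p}
        = epsDisk t v w ε ∧
    epsDisk t v w ε ⊆ depthDisk t v w ∧
    ∫ p in epsDisk t v w ε, 1 / p.2 ^ 2
      = 2 * Real.pi * ε / Real.sqrt (t ^ 2 - 1) := by
  refine ⟨superlevel_eq t v w ε hw ht hε0 hε1, ?_, eps_integral t v w ε hw ht hε0⟩
  intro p hp
  rw [mem_eps_iff t v w ε hw] at hp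
  rw [mem_depth_iff t v w hw]
  exact eps_subset_poly hw ht hε0 hε1 hp
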